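/- Two pregeometries (X₁, cl₁) and (X₂, cl₂) are isomorphic via a bijection f : X₁ → X₂ (meaning cl₂(f[Y]) = f[cl₁(Y)] for all Y ⊆ X₁) if and only if dim₁(Y) = dim₂(f[Y]) for all finite Y ⊆ X₁. -/

import Mathlib

/-- A pregeometry: a closure operator with monotonicity, idempotence,
finite character and the exchange principle. -/
structure Pregeometry (X : Type*) where
  cl : Set X → Set X
  subset_cl : ∀ Y : Set X, Y ⊆ cl Y
  mono : ∀ ⦃Y Z : Set X⦄, Y ⊆ Z → cl Y ⊆ cl Z
  idem : ∀ Y : Set X, cl (cl Y) = cl Y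
  finchar : ∀ (Y : Set X) (a : X), a ∈ cl Y → ∃ Y₀ : Finset X, ↑Y₀ ⊆ Y ∧ a ∈ cl ↑Y₀
  exchange : ∀ (Y : Set X) (a b : X), a ∈ cl (Y ∪ {b}) → a ∉ cl Y → b ∈ cl (Y ∪ {a})

/-- A set is independent if no point lies in the closure of the rest. -/
def Pregeometry.Indep {X : Type*} (P : Pregeometry X) (Y : Set X) : Prop :=
  ∀ a ∈ Y, a ∉ P.cl (Y \ {a})

/-- Dimension of a set: the cardinality of a basis, i.e. the supremum of cardinalities
of independent (finite) subsets. -/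
noncomputable def Pregeometry.dim {X : Type*} (P : Pregeometry X) (Y : Set X) : ℕ :=
  sSup {n | ∃ I : Finset X, ↑I ⊆ Y ∧ P.Indep ↑I ∧ I.card = n}


namespace Pregeometry
variable {X : Type*} (P : Pregeometry X)

theorem indep_empty : P.Indep ∅ := fun a h => absurd h (Set.notMem_empty a)

theorem cl_subset_cl {Y Z : Set X} (h : Y ⊆ P.cl Z) : P.cl Y ⊆ P.cl Z := by
  have := P.mono h
  rwa [P.idem] at this

theorem indep_insert {I : Set X} {a : X} (hI : P.Indep I) (ha : a ∉ P.cl I) :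
    P.Indep (insert a I) := by
  have haI : a ∉ I := fun h => ha (P.subset_cl I h)
  intro b hb
  rcases hb with rfl | hbI
  · have e : insert b I \ {b} = I := by
      exact Set.insert_diff_self_of_notMem haI
    rw [e]; exact ha
  · intro hmem
    have hb' : b ∉ P.cl (I \ {b}) := hI b hbI
    have hba : b ≠ a := fun h => haI (h ▸ hbI)
    have e1 : insert a I \ {b} = (I \ {b}) ∪ {a} := by
      ext x
      simp only [Set.mem_insert_iff, Set.mem_diff, Set.mem_union, Set.mem_singleton_iff]
      constructor
      · rintro ⟨rfl | hx, hxb⟩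
        · exact Or.inr rfl
        · exact Or.inl ⟨hx, hxb⟩
      · rintro (⟨hx, hxb⟩ | rfl)
        · exact ⟨Or.inr hx, hxb⟩
        · exact ⟨Or.inl rfl, hba.symm⟩
    rw [e1] at hmem
    have h2 := P.exchange (I \ {b}) b a hmem hb'
    have e2 : I \ {b} ∪ {b} = I := by
      rw [Set.diff_union_self]
      exact Set.union_eq_self_of_subset_right (Set.singleton_subset_iff.mpr hbI)
    rw [e2] at h2
    exact ha h2

/-- Swap lemma. -/
theorem ex_swap [DecidableEq X] (S : Set X) (T : Finset X) {a : X}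
    (h : a ∈ P.cl (S ∪ ↑T)) (h2 : a ∉ P.cl S) :
    ∃ b ∈ T, b ∈ P.cl (S ∪ ↑(T.erase b) ∪ {a}) := by
  classical
  -- choose a minimal subset T' of T with a ∈ cl (S ∪ T')
  have hne : (T.powerset.filter (fun T' : Finset X => a ∈ P.cl (S ∪ ↑T'))).Nonempty :=
    ⟨T, by simp [h]⟩
  obtain ⟨T', hT'mem, hmin⟩ := Finset.exists_min_image _ Finset.card hne
  simp only [Finset.mem_filter, Finset.mem_powerset] at hT'mem
  obtain ⟨hT'T, hT'cl⟩ := hT'mem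
  have hT'ne : T'.Nonempty := by
    rcases T'.eq_empty_or_nonempty with rfl | h'
    · simp at hT'cl; exact absurd hT'cl h2
    · exact h'
  obtain ⟨b, hb⟩ := hT'ne
  refine ⟨b, hT'T hb, ?_⟩
  have hnb : a ∉ P.cl (S ∪ ↑(T'.erase b)) := by
    intro hcon
    have : (T'.erase b).card < T'.card := Finset.card_erase_lt_of_mem hb
    have hle := hmin (T'.erase b) (by
      simp only [Finset.mem_filter, Finset.mem_powerset]
      exact ⟨(T'.erase_subset b).trans hT'T, hcon⟩)
    omega
  have hab : a ∈ P.cl (S ∪ ↑(T'.erase b) ∪ {b}) := by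
    have e : S ∪ ↑(T'.erase b) ∪ {b} = S ∪ ↑T' := by
      rw [Set.union_assoc]
      congr 1
      rw [Finset.coe_erase, Set.diff_union_self]
      exact Set.union_eq_self_of_subset_right (Set.singleton_subset_iff.mpr hb)
    rw [e]; exact hT'cl
  have := P.exchange _ a b hab hnb
  refine P.mono ?_ this
  apply Set.union_subset_union_left
  apply Set.union_subset_union_right
  exact_mod_cast Finset.coe_subset.mpr (Finset.erase_subset_erase b hT'T)

/-- Steinitz exchange: an independent set within the closure of `J` has at most `|J|` elements. -/
theorem steinitz [DecidableEq X] :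
    ∀ (n : ℕ) (I J : Finset X), (I \ J).card ≤ n → P.Indep ↑I → ↑I ⊆ P.cl ↑J →
      I.card ≤ J.card := by
  intro n
  induction n with
  | zero =>
    intro I J hn _ _
    have : I ⊆ J := by
      rw [← Finset.sdiff_eq_empty_iff_subset]
      exact Finset.card_eq_zero.mp (Nat.le_zero.mp hn)
    exact Finset.card_le_card this
  | succ n ih =>
    intro I J hn hI hIJ
    rcases (I \ J).eq_empty_or_nonempty with he | ⟨a, ha⟩
    · exact Finset.card_le_card (Finset.sdiff_eq_empty_iff_subset.mp he)
    · rw [Finset.mem_sdiff] at ha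
      obtain ⟨haI, haJ⟩ := ha
      have hnotS : a ∉ P.cl ↑(I ∩ J) := by
        intro hcon
        refine hI a haI (P.mono ?_ hcon)
        intro x hx
        simp only [Finset.coe_inter, Set.mem_inter_iff, Finset.mem_coe] at hx
        simp only [Set.mem_diff, Finset.mem_coe, Set.mem_singleton_iff]
        exact ⟨hx.1, fun h => haJ (h ▸ hx.2)⟩
      have haJcl : a ∈ P.cl (↑(I ∩ J) ∪ ↑(J \ I)) := by
        have e : (↑(I ∩ J) : Set X) ∪ ↑(J \ I) = ↑J := by
          ext x
          simp only [Set.mem_union, Finset.coe_inter, Set.mem_inter_iff, Finset.mem_coe,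
            Finset.coe_sdiff, Set.mem_diff]
          tauto
        rw [e]; exact hIJ (Finset.mem_coe.mpr haI)
      obtain ⟨b, hbT, hbcl⟩ := P.ex_swap _ _ haJcl hnotS
      rw [Finset.mem_sdiff] at hbT
      obtain ⟨hbJ, hbI⟩ := hbT
      set J' : Finset X := insert a (J.erase b) with hJ'
      have hbJ' : b ∈ P.cl ↑J' := by
        refine P.mono ?_ hbcl
        intro x hx
        simp only [Set.mem_union, Finset.coe_inter, Set.mem_inter_iff, Finset.mem_coe,
          Finset.coe_erase, Finset.coe_sdiff, Set.mem_diff, Set.mem_singleton_iff] at hx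
        have hgoal : x ∈ insert a (J.erase b) := by
          simp only [Finset.mem_insert, Finset.mem_erase]
          rcases hx with (⟨hx1, hx2⟩ | ⟨⟨hx1, hx2⟩, hx3⟩) | rfl
          · exact Or.inr ⟨fun h => hbI (h ▸ hx1), hx2⟩
          · exact Or.inr ⟨hx3, hx1⟩
          · exact Or.inl rfl
        rw [hJ']
        exact_mod_cast hgoal
      have hJsub : ↑J ⊆ P.cl ↑J' := by
        intro x hx
        rcases eq_or_ne x b with rfl | hxb
        · exact hbJ'
        · refine P.subset_cl _ ?_
          simp only [hJ', Finset.coe_insert, Set.mem_insert_iff, Finset.mem_coe,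
            Finset.mem_erase]
          exact Or.inr ⟨hxb, hx⟩
      have hIJ' : ↑I ⊆ P.cl ↑J' := fun x hx => P.cl_subset_cl hJsub (hIJ hx)
      have hcard : J'.card = J.card := by
        rw [hJ', Finset.card_insert_of_notMem (fun h => haJ (Finset.mem_of_mem_erase h)),
          Finset.card_erase_of_mem hbJ]
        have : 0 < J.card := Finset.card_pos.mpr ⟨b, hbJ⟩
        omega
      have hsd : (I \ J').card ≤ n := by
        have hsub : I \ J' ⊆ (I \ J).erase a := by
          intro x hx
          simp only [Finset.mem_sdiff, hJ', Finset.mem_insert, Finset.mem_erase] at hx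
          push_neg at hx
          obtain ⟨hxI, hxa, hx2⟩ := hx
          simp only [Finset.mem_erase, Finset.mem_sdiff]
          refine ⟨hxa, hxI, fun hxJ => ?_⟩
          rcases eq_or_ne x b with rfl | hxb
          · exact hbI hxI
          · exact (hx2 hxb) hxJ
        have h1 := Finset.card_le_card hsub
        have h2 : a ∈ I \ J := Finset.mem_sdiff.mpr ⟨haI, haJ⟩
        have h3 := Finset.card_erase_of_mem h2
        have h4 : 0 < (I \ J).card := Finset.card_pos.mpr ⟨a, h2⟩
        omega
      have := ih I J' hsd hI hIJ'
      omega

theorem dim_bddAbove (Y : Finset X) :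
    BddAbove {n | ∃ I : Finset X, ↑I ⊆ (↑Y : Set X) ∧ P.Indep ↑I ∧ I.card = n} := by
  refine ⟨Y.card, ?_⟩
  rintro n ⟨I, hIY, _, rfl⟩
  exact Finset.card_le_card (fun x hx => Finset.mem_coe.mp (hIY (Finset.mem_coe.mpr hx)))

theorem dim_nonempty (Y : Set X) :
    Set.Nonempty {n | ∃ I : Finset X, ↑I ⊆ Y ∧ P.Indep ↑I ∧ I.card = n} :=
  ⟨0, ∅, by simp, by simpa using P.indep_empty, rfl⟩

/-- Every finite set has a basis. -/
theorem exists_basis (Y : Finset X) :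
    ∃ B : Finset X, B ⊆ Y ∧ P.Indep ↑B ∧ (↑Y : Set X) ⊆ P.cl ↑B ∧ P.dim ↑Y = B.card := by
  classical
  have hne : (Y.powerset.filter (fun I : Finset X => P.Indep ↑I)).Nonempty :=
    ⟨∅, by simp [P.indep_empty]⟩
  obtain ⟨B, hBmem, hmax⟩ := Finset.exists_max_image _ Finset.card hne
  simp only [Finset.mem_filter, Finset.mem_powerset] at hBmem
  obtain ⟨hBY, hBind⟩ := hBmem
  have hspan : (↑Y : Set X) ⊆ P.cl ↑B := by
    intro x hx
    by_contra hxc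
    have hxB : x ∉ B := fun h => hxc (P.subset_cl _ (Finset.mem_coe.mpr h))
    have hind : P.Indep ↑(insert x B) := by
      rw [Finset.coe_insert]
      exact P.indep_insert hBind hxc
    have hle := hmax (insert x B) (by
      simp only [Finset.mem_filter, Finset.mem_powerset]
      exact ⟨Finset.insert_subset (Finset.mem_coe.mp hx) hBY, hind⟩)
    rw [Finset.card_insert_of_notMem hxB] at hle
    omega
  refine ⟨B, hBY, hBind, hspan, ?_⟩
  apply le_antisymm
  · apply csSup_le (P.dim_nonempty _)
    rintro n ⟨I, hIY, hIind, rfl⟩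
    exact hmax I (by
      simp only [Finset.mem_filter, Finset.mem_powerset]
      exact ⟨fun x hx => Finset.mem_coe.mp (hIY (Finset.mem_coe.mpr hx)), hIind⟩)
  · exact le_csSup (P.dim_bddAbove Y) ⟨B, Finset.coe_subset.mpr hBY, hBind, rfl⟩

theorem dim_mono {Y Z : Finset X} (h : Y ⊆ Z) : P.dim ↑Y ≤ P.dim ↑Z := by
  apply csSup_le (P.dim_nonempty _)
  rintro n ⟨I, hIY, hind, rfl⟩
  exact le_csSup (P.dim_bddAbove Z) ⟨I, hIY.trans (Finset.coe_subset.mpr h), hind, rfl⟩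

/-- Key characterization: membership in the closure via dimension. -/
theorem mem_cl_iff_dim [DecidableEq X] (Y : Finset X) (a : X) :
    a ∈ P.cl ↑Y ↔ P.dim ↑(insert a Y) = P.dim ↑Y := by
  obtain ⟨B, hBY, hBind, hspan, hdim⟩ := P.exists_basis Y
  constructor
  · intro ha
    apply le_antisymm
    · apply csSup_le (P.dim_nonempty _)
      rintro n ⟨I, hIY, hind, rfl⟩
      have hIcl : ↑I ⊆ P.cl ↑B := by
        refine fun x hx => P.cl_subset_cl hspan ?_
        have := hIY hx
        rw [Finset.coe_insert] at this
        rcases this with rfl | hxY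
        · exact ha
        · exact P.subset_cl _ hxY
      have := P.steinitz (I \ B).card I B le_rfl hind hIcl
      omega
    · exact P.dim_mono (Finset.subset_insert a Y)
  · intro hdeq
    by_contra hac
    have haB : a ∉ P.cl ↑B := fun h => hac (P.cl_subset_cl (fun x hx => P.subset_cl _ (Finset.coe_subset.mpr hBY hx)) h)
    have haB' : a ∉ B := fun h => haB (P.subset_cl _ (Finset.mem_coe.mpr h))
    have hind : P.Indep ↑(insert a B) := by
      rw [Finset.coe_insert]
      exact P.indep_insert hBind haB
    have hge : B.card + 1 ≤ P.dim ↑(insert a Y) := by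
      have : (insert a B).card = B.card + 1 := Finset.card_insert_of_notMem haB'
      refine le_csSup (P.dim_bddAbove _) ⟨insert a B, ?_, hind, this⟩
      exact Finset.coe_subset.mpr (Finset.insert_subset_insert a hBY)
    omega

end Pregeometry

theorem indep_image_iff {X₁ X₂ : Type*} (P₁ : Pregeometry X₁) (P₂ : Pregeometry X₂)
    (f : X₁ ≃ X₂) (h : ∀ Y : Set X₁, P₂.cl (f '' Y) = f '' P₁.cl Y) (S : Set X₁) :
    P₁.Indep S ↔ P₂.Indep (f '' S) := by
  have key : ∀ a : X₁, (f '' S) \ {f a} = f '' (S \ {a}) := by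
    intro a
    rw [Set.image_diff f.injective, Set.image_singleton]
  constructor
  · rintro hS b hb
    obtain ⟨a, ha, rfl⟩ := hb
    rw [key a, h, Function.Injective.mem_set_image f.injective]
    exact hS a ha
  · intro hS a ha
    have := hS (f a) ⟨a, ha, rfl⟩
    rw [key a, h, Function.Injective.mem_set_image f.injective] at this
    exact this


/-- Two pregeometries are isomorphic via a bijection `f` (i.e. `f` carries closure to
closure) if and only if `f` preserves the dimension of every finite set. -/
theorem stmt1 {X₁ X₂ : Type*} (P₁ : Pregeometry X₁) (P₂ : Pregeometry X₂) (f : X₁ ≃ X₂) :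
    (∀ Y : Set X₁, P₂.cl (f '' Y) = f '' P₁.cl Y) ↔
    (∀ Y : Finset X₁, P₁.dim ↑Y = P₂.dim (f '' ↑Y)) := by
  classical
  constructor
  · intro h Y
    unfold Pregeometry.dim
    congr 1
    ext n
    constructor
    · rintro ⟨I, hIY, hind, rfl⟩
      refine ⟨I.image f, ?_, ?_, ?_⟩
      · rw [Finset.coe_image]
        exact Set.image_mono hIY
      · rw [Finset.coe_image]
        exact (indep_image_iff P₁ P₂ f h ↑I).mp hind
      · exact Finset.card_image_of_injective I f.injective
    · rintro ⟨J, hJY, hind, rfl⟩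
      refine ⟨J.image f.symm, ?_, ?_, ?_⟩
      · rw [Finset.coe_image]
        intro x hx
        obtain ⟨b, hb, rfl⟩ := hx
        obtain ⟨y, hy, hyb⟩ := hJY hb
        rw [← hyb]
        simpa using hy
      · rw [Finset.coe_image]
        have := (indep_image_iff P₁ P₂ f h (f.symm '' ↑J)).mpr
        rw [Equiv.image_symm_image] at this
        exact this hind
      · exact Finset.card_image_of_injective J f.symm.injective
  · intro h Y
    have h' : ∀ Z : Finset X₂, P₂.dim ↑Z = P₁.dim (f.symm '' ↑Z) := by
      intro Z
      have := h (Z.image f.symm)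
      rw [Finset.coe_image, Equiv.image_symm_image] at this
      exact this.symm
    apply Set.Subset.antisymm
    · intro b hb
      obtain ⟨Z₀, hZ₀Y, hbZ₀⟩ := P₂.finchar _ b hb
      set a := f.symm b with haeq
      set W₀ : Finset X₁ := Z₀.image f.symm with hW₀
      have hW₀Y : ↑W₀ ⊆ Y := by
        rw [hW₀, Finset.coe_image]
        intro x hx
        obtain ⟨z, hz, rfl⟩ := hx
        obtain ⟨y, hy, hyz⟩ := hZ₀Y hz
        rw [← hyz]
        simpa using hy
      have hdim2 : P₂.dim ↑(insert b Z₀) = P₂.dim ↑Z₀ := (P₂.mem_cl_iff_dim Z₀ b).mp hbZ₀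
      have e1 : f.symm '' ↑(insert b Z₀) = ↑(insert a W₀) := by
        rw [Finset.coe_insert, Set.image_insert_eq, Finset.coe_insert, hW₀, Finset.coe_image]
      have e2 : f.symm '' ↑Z₀ = ↑W₀ := by rw [hW₀, Finset.coe_image]
      have hdim1 : P₁.dim ↑(insert a W₀) = P₁.dim ↑W₀ := by
        rw [← e1, ← e2, ← h', ← h', hdim2]
      have haW : a ∈ P₁.cl ↑W₀ := (P₁.mem_cl_iff_dim W₀ a).mpr hdim1
      have : a ∈ P₁.cl Y := P₁.mono hW₀Y haW
      exact ⟨a, this, by simp [haeq]⟩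
    · rintro b ⟨a, ha, rfl⟩
      obtain ⟨Y₀, hY₀Y, haY₀⟩ := P₁.finchar _ a ha
      have hdim1 : P₁.dim ↑(insert a Y₀) = P₁.dim ↑Y₀ := (P₁.mem_cl_iff_dim Y₀ a).mp haY₀
      have e1 : f '' ↑(insert a Y₀) = ↑(insert (f a) (Y₀.image f)) := by
        rw [Finset.coe_insert, Set.image_insert_eq, Finset.coe_insert, Finset.coe_image]
      have e2 : f '' ↑Y₀ = ↑(Y₀.image f) := (Finset.coe_image).symm
      have hdim2 : P₂.dim ↑(insert (f a) (Y₀.image f)) = P₂.dim ↑(Y₀.image f) := by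
        rw [← e1, ← e2, ← h, ← h, hdim1]
      have hfa : f a ∈ P₂.cl ↑(Y₀.image f) :=
        (P₂.mem_cl_iff_dim (Y₀.image f) (f a)).mpr hdim2
      refine P₂.mono ?_ hfa
      rw [Finset.coe_image]
      exact Set.image_mono hY₀Y
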